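/- Let (X, r) be a non-degenerate involutive set-theoretic solution of the Yang–Baxter equation with |X| = m ≥ 2, let λ ∈ P(n, m) have positive parts λ_1 ≥ ⋯ ≥ λ_k > 0, and let x ∈ X^n be a λ-element. Then the cardinality of the orbit of x is |O(x)| = n!/(λ_1! λ_2! ⋯ λ_k!). -/

import Mathlib

/-! Set-theoretic solutions of the Yang–Baxter equation.
For `r : X × X → X × X` we write `r (i, j) = (σ i j, τ j i)`, i.e. `σ_i(j) = σ i j` and
`τ_j(i) = τ j i`. -/

variable {X : Type*}

/-- The map `r : X × X → X × X` determined by families `σ`, `τ` via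
`r (i, j) = (σ_i(j), τ_j(i))`. -/
def rmapF (σ τ : X → X → X) : X × X → X × X := fun p => (σ p.1 p.2, τ p.2 p.1)

/-- `r × id` on `X × X × X`. -/
def ridF (r : X × X → X × X) : X × X × X → X × X × X :=
  fun p => ((r (p.1, p.2.1)).1, (r (p.1, p.2.1)).2, p.2.2)

/-- `id × r` on `X × X × X`. -/
def idrF (r : X × X → X × X) : X × X × X → X × X × X := fun p => (p.1, r p.2)

/-- The braid (Yang–Baxter) equation `(r × id) ∘ (id × r) ∘ (r × id) = (id × r) ∘ (r × id) ∘ (id × r)`. -/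
def BraidEq (r : X × X → X × X) : Prop :=
  ridF r ∘ idrF r ∘ ridF r = idrF r ∘ ridF r ∘ idrF r

/-- A non-degenerate involutive set-theoretic solution of the Yang–Baxter equation on `X`:
the maps `σ_i` and `τ_i` are bijective (packaged as equivalences), the induced map
`r (i, j) = (σ_i(j), τ_j(i))` satisfies the braid equation, and `r ∘ r = id`
(which in particular makes `r` bijective). -/
structure NDIS (X : Type*) where
  σ : X → X ≃ X
  τ : X → X ≃ X
  braid : BraidEq (rmapF (fun i => ⇑(σ i)) (fun i => ⇑(τ i)))
  invol : ∀ p : X × X,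
    rmapF (fun i => ⇑(σ i)) (fun i => ⇑(τ i))
      (rmapF (fun i => ⇑(σ i)) (fun i => ⇑(τ i)) p) = p

namespace NDIS

/-- The map `r` of the solution. -/
def r (S : NDIS X) : X × X → X × X := rmapF (fun i => ⇑(S.σ i)) (fun i => ⇑(S.τ i))

/-- The diagonal `D : X → X`, `D(i) = τ_i⁻¹(i)`. -/
def D (S : NDIS X) : X → X := fun i => (S.τ i).symm i

end NDIS
namespace NDIS

/-- One elementary move on words: apply `r` to two adjacent letters. -/
def Step (S : NDIS X) (x y : List X) : Prop :=
  ∃ (u v : List X) (i j : X), x = u ++ i :: j :: v ∧ y = u ++ S.σ i j :: S.τ j i :: v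

/-- The orbit `O(x)` of a word `x` under the equivalence relation generated by the
adjacent `r`-moves (equivalently, the orbit of the induced `S_n`-action on `X^n`). -/
def Orb (S : NDIS X) (x : List X) : Set (List X) := {y | Relation.EqvGen S.Step x y}

/-- `Ψ_k(a) = (D^{k−1}(a), …, D(a), a)`. -/
def Psi (S : NDIS X) (k : ℕ) (a : X) : List X :=
  (List.range k).map fun t => S.D^[k - 1 - t] a

/-- The inverse of the diagonal `D`. -/
noncomputable def Dinv (S : NDIS X) [Nonempty X] : X → X := Function.invFun S.D

/-- `Ψ_{−k}(a) = (a, D^{−1}(a), …, D^{−(k−1)}(a))`. -/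
noncomputable def PsiNeg (S : NDIS X) [Nonempty X] (k : ℕ) (a : X) : List X :=
  (List.range k).map fun t => S.Dinv^[t] a

/-- `σ_x = σ_{a_1} ∘ σ_{a_2} ∘ ⋯ ∘ σ_{a_k}` for a word `x = (a_1, …, a_k)`. -/
def sigmaWord (S : NDIS X) (x : List X) (z : X) : X := x.foldr (fun a w => S.σ a w) z

/-- `τ_x = τ_{a_k} ∘ ⋯ ∘ τ_{a_2} ∘ τ_{a_1}` for a word `x = (a_1, …, a_k)`. -/
def tauWord (S : NDIS X) (x : List X) (z : X) : X := x.foldl (fun w a => S.τ a w) z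

/-- The concatenation `Ψ_{L 0}(a 0) Ψ_{L 1}(a 1) ⋯ Ψ_{L (k-1)}(a (k-1))`. -/
def word (S : NDIS X) {k : ℕ} (L : Fin k → ℕ) (a : Fin k → X) : List X :=
  (List.ofFn fun t => S.Psi (L t) (a t)).flatten

/-- The concatenation `Ψ_{L (i+1)}(a (i+1)) ⋯ Ψ_{L (j-1)}(a (j-1))` of the blocks strictly
between positions `i` and `j` (the empty word when `j = i + 1`). -/
def midword (S : NDIS X) {k : ℕ} (L : Fin k → ℕ) (a : Fin k → X) (i j : Fin k) : List X :=
  (((List.ofFn fun t => S.Psi (L t) (a t)).drop ((i : ℕ) + 1)).take ((j : ℕ) - (i : ℕ) - 1)).flatten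

/-- The family `a` yields a `λ`-element: `a_j ≠ D^{−λ_j}(τ_w(a_i))` for all `i < j`, with
`w = Ψ_{λ_{i+1}}(a_{i+1}) ⋯ Ψ_{λ_{j−1}}(a_{j−1})`. -/
def IsLambdaFamily (S : NDIS X) [Nonempty X] {k : ℕ} (L : Fin k → ℕ) (a : Fin k → X) : Prop :=
  ∀ i j : Fin k, i < j →
    a j ≠ S.Dinv^[L j] (S.tauWord (S.midword L a i j) (a i))

/-- `x` is a `λ`-element for the partition with positive parts `L 0 ≥ L 1 ≥ ⋯ ≥ L (k-1) > 0`. -/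
def IsLambdaWord (S : NDIS X) [Nonempty X] {k : ℕ} (L : Fin k → ℕ) (x : List X) : Prop :=
  ∃ a : Fin k → X, x = S.word L a ∧ S.IsLambdaFamily L a

/-- The bijection `b` of `X^n` applying `r` to the entries in (0-based) positions `j` and
`j + 1` and fixing all other entries. -/
def bmap (S : NDIS X) {n : ℕ} (j : ℕ) (hj : j + 1 < n) (x : Fin n → X) : Fin n → X :=
  fun t =>
    if (t : ℕ) = j then S.σ (x ⟨j, by omega⟩) (x ⟨j + 1, hj⟩)
    else if (t : ℕ) = j + 1 then S.τ (x ⟨j + 1, hj⟩) (x ⟨j, by omega⟩)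
    else x t

/-- One elementary move on `X^n` (as functions `Fin n → X`). -/
def StepF (S : NDIS X) {n : ℕ} (x y : Fin n → X) : Prop :=
  ∃ (j : ℕ) (hj : j + 1 < n), y = S.bmap j hj x

end NDIS

namespace NDIS

set_option linter.unusedSectionVars false
set_option linter.unnecessarySimpa false

variable (S : NDIS X)

lemma inv1 (i j : X) : S.σ (S.σ i j) (S.τ j i) = i := by
  have h := S.invol (i, j)
  simp only [rmapF, Prod.mk.injEq] at h
  exact h.1

lemma inv2 (i j : X) : S.τ (S.τ j i) (S.σ i j) = j := by
  have h := S.invol (i, j)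
  simp only [rmapF, Prod.mk.injEq] at h
  exact h.2

lemma braid_all (x y z : X) :
    S.σ x (S.σ y z) = S.σ (S.σ x y) (S.σ (S.τ y x) z) ∧
    S.τ (S.σ (S.τ y x) z) (S.σ x y) = S.σ (S.τ (S.σ y z) x) (S.τ z y) ∧
    S.τ z (S.τ y x) = S.τ (S.τ z y) (S.τ (S.σ y z) x) := by
  have h := congrFun S.braid (x, (y, z))
  simp only [Function.comp_apply, ridF, idrF, rmapF, Prod.mk.injEq] at h
  exact ⟨h.1.symm, h.2.1, h.2.2⟩

lemma braid1 (x y z : X) : S.σ x (S.σ y z) = S.σ (S.σ x y) (S.σ (S.τ y x) z) :=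
  (S.braid_all x y z).1

lemma braid2 (x y z : X) : S.τ (S.σ (S.τ y x) z) (S.σ x y) = S.σ (S.τ (S.σ y z) x) (S.τ z y) :=
  (S.braid_all x y z).2.1

lemma braid3 (x y z : X) : S.τ z (S.τ y x) = S.τ (S.τ z y) (S.τ (S.σ y z) x) :=
  (S.braid_all x y z).2.2

lemma tau_D (a : X) : S.τ a (S.D a) = a := (S.τ a).apply_symm_apply a

lemma sigma_D (a : X) : S.σ (S.D a) a = S.D a := by
  have h := S.inv2 (S.D a) a
  rw [S.tau_D] at h
  have h2 := congrArg (S.τ a).symm h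
  rw [Equiv.symm_apply_apply] at h2
  exact h2

lemma lemA (a v : X) : S.τ (S.σ a v) (S.D a) = S.D (S.τ v a) := by
  have h := S.braid3 (S.D a) a v
  rw [S.tau_D] at h
  have h2 := congrArg (S.τ (S.τ v a)).symm h
  rw [Equiv.symm_apply_apply] at h2
  exact h2.symm

lemma lemH1 (u c : X) : S.τ u (S.D (S.σ u c)) = S.D c := by
  have h := S.lemA (S.σ u c) (S.τ c u)
  rw [S.inv1, S.inv2] at h
  exact h

lemma lemA' (p v : X) : S.σ p (S.D v) = S.D (S.σ (S.τ (S.D v) p) v) := by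
  have h1 := S.lemH1 (S.τ (S.D v) p) v
  have h2 := S.inv2 p (S.D v)
  exact (S.τ (S.τ (S.D v) p)).injective (h2.trans h1.symm)

lemma D_E (c : X) : S.D ((S.σ c).symm c) = c := by
  set b := (S.σ c).symm c with hb
  have hσ : S.σ c b = c := (S.σ c).apply_symm_apply c
  have h2 := S.inv1 c b
  rw [hσ] at h2
  have h3 : S.τ b c = b := (S.σ c).injective (h2.trans hσ.symm)
  have h4 := congrArg (S.τ b).symm h3
  rw [Equiv.symm_apply_apply] at h4
  exact h4.symm

lemma E_D (a : X) : (S.σ (S.D a)).symm (S.D a) = a := by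
  have := congrArg (S.σ (S.D a)).symm (S.sigma_D a)
  rw [Equiv.symm_apply_apply] at this
  exact this.symm

lemma D_bij : Function.Bijective S.D :=
  Function.bijective_iff_has_inverse.2
    ⟨fun c => (S.σ c).symm c, fun a => S.E_D a, fun c => S.D_E c⟩


end NDIS

namespace NDIS

set_option linter.unusedSectionVars false
set_option linter.unnecessarySimpa false

variable (S : NDIS X)

/-! ### word-level auxiliary lemmas -/

@[simp] lemma sigmaWord_nil (z : X) : S.sigmaWord [] z = z := rfl
@[simp] lemma sigmaWord_cons (a : X) (u : List X) (z : X) :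
    S.sigmaWord (a :: u) z = S.σ a (S.sigmaWord u z) := rfl
lemma sigmaWord_append (u v : List X) (z : X) :
    S.sigmaWord (u ++ v) z = S.sigmaWord u (S.sigmaWord v z) := by
  simp [sigmaWord, List.foldr_append]

@[simp] lemma tauWord_nil (z : X) : S.tauWord [] z = z := rfl
@[simp] lemma tauWord_cons (a : X) (u : List X) (z : X) :
    S.tauWord (a :: u) z = S.tauWord u (S.τ a z) := rfl
lemma tauWord_append (u v : List X) (z : X) :
    S.tauWord (u ++ v) z = S.tauWord v (S.tauWord u z) := by
  simp [tauWord, List.foldl_append]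

lemma sigmaWord_injective (u : List X) : Function.Injective (S.sigmaWord u) := by
  induction u with
  | nil => exact fun a b h => h
  | cons p t ih => exact fun a b h => ih ((S.σ p).injective h)

lemma tauWord_injective (u : List X) : Function.Injective (fun z => S.tauWord u z) := by
  induction u with
  | nil => exact fun a b h => h
  | cons p t ih => exact fun a b h => (S.τ p).injective (ih h)

/-- `twistWord u v` : the word `u` after the letter `v` has passed through it from the right. -/
def twistWord (S : NDIS X) : List X → X → List X
  | [], _ => []
  | u :: t, v => S.τ (S.sigmaWord t v) u :: twistWord S t v

@[simp] lemma twistWord_nil (v : X) : S.twistWord [] v = [] := rfl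
@[simp] lemma twistWord_cons (a : X) (t : List X) (v : X) :
    S.twistWord (a :: t) v = S.τ (S.sigmaWord t v) a :: S.twistWord t v := rfl

lemma twistWord_append (u w : List X) (z : X) :
    S.twistWord (u ++ w) z = S.twistWord u (S.sigmaWord w z) ++ S.twistWord w z := by
  induction u with
  | nil => simp
  | cons p t ih => simp [ih, sigmaWord_append]

@[simp] lemma twistWord_length (u : List X) (z : X) :
    (S.twistWord u z).length = u.length := by
  induction u with
  | nil => simp
  | cons p t ih => simp [ih]

/-- `D ∘ σ_w = τ_w⁻¹ ∘ D` in the guarded form. -/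
lemma tauWord_D_sigmaWord (w : List X) (z : X) :
    S.tauWord w (S.D (S.sigmaWord w z)) = S.D z := by
  induction w with
  | nil => simp
  | cons p t ih => simpa [S.lemH1] using ih

/-- The master braid lemma at word level. -/
lemma Mlem (y z : X) (u : List X) :
    S.sigmaWord u (S.σ y z)
      = S.σ (S.sigmaWord u y) (S.sigmaWord (S.twistWord u y) z) ∧
    S.τ (S.sigmaWord (S.twistWord u y) z) (S.sigmaWord u y)
      = S.sigmaWord (S.twistWord u (S.σ y z)) (S.τ z y) ∧
    S.twistWord (S.twistWord u (S.σ y z)) (S.τ z y)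
      = S.twistWord (S.twistWord u y) z := by
  induction u with
  | nil => simp
  | cons p t ih =>
    obtain ⟨ih1, ih2, ih3⟩ := ih
    set A1 := S.sigmaWord t y with hA1
    set B1 := S.sigmaWord (S.twistWord t y) z with hB1
    refine ⟨?_, ?_, ?_⟩
    · simp only [sigmaWord_cons, twistWord_cons, ih1, ← hA1, ← hB1]
      exact S.braid1 p A1 B1
    · simp only [sigmaWord_cons, twistWord_cons, ← hA1, ← hB1, ih1]
      rw [S.braid2 p A1 B1, ih2, ← ih1]
    · simp only [twistWord_cons, sigmaWord_cons, ← hA1, ← hB1, ih1, ih3]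
      rw [← ih2]
      congr 1
      exact (S.braid3 p A1 B1).symm
  
lemma M1 (y z : X) (u : List X) :
    S.sigmaWord u (S.σ y z)
      = S.σ (S.sigmaWord u y) (S.sigmaWord (S.twistWord u y) z) := (S.Mlem y z u).1

lemma M2 (y z : X) (u : List X) :
    S.τ (S.sigmaWord (S.twistWord u y) z) (S.sigmaWord u y)
      = S.sigmaWord (S.twistWord u (S.σ y z)) (S.τ z y) := (S.Mlem y z u).2.1

lemma M3 (y z : X) (u : List X) :
    S.twistWord (S.twistWord u (S.σ y z)) (S.τ z y)
      = S.twistWord (S.twistWord u y) z := (S.Mlem y z u).2.2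

/-- Lemma Cw : `σ_u(D v) = D (σ_{T(u, Dv)}(v))`. -/
lemma lemCw (v : X) (u : List X) :
    S.sigmaWord u (S.D v) = S.D (S.sigmaWord (S.twistWord u (S.D v)) v) := by
  induction u with
  | nil => simp
  | cons p t ih =>
    simp only [sigmaWord_cons, twistWord_cons, ih]
    rw [S.lemA' p (S.sigmaWord (S.twistWord t (S.D v)) v), ← ih]

/-! ### Psi lemmas -/

@[simp] lemma Psi_zero (a : X) : S.Psi 0 a = [] := by simp [Psi]

lemma Psi_succ (k : ℕ) (a : X) : S.Psi (k+1) a = S.D^[k] a :: S.Psi k a := by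
  simp only [Psi, List.range_succ_eq_map, List.map_cons, List.map_map]
  refine List.cons_eq_cons.mpr ⟨by simp, ?_⟩
  refine List.map_congr_left fun t ht => ?_
  simp only [Function.comp_apply]
  congr 1
  omega

@[simp] lemma Psi_length (k : ℕ) (a : X) : (S.Psi k a).length = k := by simp [Psi]

/-- L24: `τ_{σ_{Ψ_k(a)}(v)}(D^k a) = D^k (τ_v a)`. -/
lemma tau_psi (a v : X) : ∀ k, S.τ (S.sigmaWord (S.Psi k a) v) (S.D^[k] a) = S.D^[k] (S.τ v a) := by
  intro k
  induction k with
  | zero => simp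
  | succ k ih =>
    rw [Psi_succ, sigmaWord_cons, Function.iterate_succ_apply', Function.iterate_succ_apply',
      S.lemA (S.D^[k] a) (S.sigmaWord (S.Psi k a) v), ih]

/-- L25: `twistWord (Ψ_k a) v = Ψ_k (τ_v a)`. -/
lemma twist_psi (a v : X) : ∀ k, S.twistWord (S.Psi k a) v = S.Psi k (S.τ v a) := by
  intro k
  induction k with
  | zero => simp
  | succ k ih => rw [Psi_succ, twistWord_cons, S.tau_psi, ih, Psi_succ]

/-! ### Dinv lemmas -/

variable [Nonempty X]

lemma D_Dinv (x : X) : S.D (S.Dinv x) = x := Function.rightInverse_invFun S.D_bij.2 x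
lemma Dinv_D (x : X) : S.Dinv (S.D x) = x := Function.leftInverse_invFun S.D_bij.1 x

lemma D_iter_Dinv_iter (k : ℕ) (x : X) : S.D^[k] (S.Dinv^[k] x) = x := by
  induction k with
  | zero => simp
  | succ k ih =>
    rw [Function.iterate_succ_apply' S.Dinv k x, Function.iterate_succ_apply S.D k, S.D_Dinv, ih]

lemma Dinv_iter_D_iter (k : ℕ) (x : X) : S.Dinv^[k] (S.D^[k] x) = x := by
  induction k with
  | zero => simp
  | succ k ih =>
    rw [Function.iterate_succ_apply' S.D k x, Function.iterate_succ_apply S.Dinv k, S.Dinv_D, ih]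

lemma eq_Dinv_iter_iff (k : ℕ) (x w : X) : x = S.Dinv^[k] w ↔ S.D^[k] x = w := by
  constructor
  · rintro rfl; exact S.D_iter_Dinv_iter k w
  · rintro rfl; exact (S.Dinv_iter_D_iter k x).symm

/-- L28: `σ_{Ψ_{k+1}(a)}(D⁻¹ a) = D^k a`. -/
lemma sigma_psi_Dinv (a : X) : ∀ k, S.sigmaWord (S.Psi (k+1) a) (S.Dinv a) = S.D^[k] a := by
  intro k
  induction k with
  | zero =>
    rw [Psi_succ, Psi_zero, Function.iterate_zero_apply]
    show S.σ a (S.sigmaWord [] (S.Dinv a)) = a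
    have h := S.sigma_D (S.Dinv a)
    rw [S.D_Dinv] at h
    simpa using h
  | succ k ih =>
    rw [Psi_succ, sigmaWord_cons, ih, Function.iterate_succ_apply']
    exact S.sigma_D _


end NDIS

set_option linter.unusedSectionVars false in
set_option linter.unnecessarySimpa false in
section
set_option linter.unusedSectionVars false
set_option linter.unnecessarySimpa false
namespace NDIS

set_option linter.unusedSectionVars false

/-! ### Block data level -/

/-- The word of a list of blocks. -/
def Wd (S : NDIS X) (B : List (ℕ × X)) : List X := (B.map fun q => S.Psi q.1 q.2).flatten

/-- Total length of a block list. -/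
def wtot (B : List (ℕ × X)) : ℕ := (B.map Prod.fst).sum

/-- Product of factorials of the block lengths. -/
def wfac (B : List (ℕ × X)) : ℕ := (B.map fun q => Nat.factorial q.1).prod

/-- The block list twisted by a letter passing through from the right. -/
def twistD (S : NDIS X) : List (ℕ × X) → X → List (ℕ × X)
  | [], _ => []
  | q :: t, v => (q.1, S.τ (S.sigmaWord (S.Wd t) v) q.2) :: twistD S t v

variable (S : NDIS X)

@[simp] lemma Wd_nil : S.Wd [] = [] := rfl
@[simp] lemma Wd_cons (q : ℕ × X) (t : List (ℕ × X)) :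
    S.Wd (q :: t) = S.Psi q.1 q.2 ++ S.Wd t := rfl
lemma Wd_append (u v : List (ℕ × X)) : S.Wd (u ++ v) = S.Wd u ++ S.Wd v := by
  simp [Wd]

@[simp] lemma wtot_nil : wtot ([] : List (ℕ × X)) = 0 := rfl
@[simp] lemma wtot_cons (q : ℕ × X) (t : List (ℕ × X)) : wtot (q :: t) = q.1 + wtot t := rfl
lemma wtot_append (u v : List (ℕ × X)) : wtot (u ++ v) = wtot u + wtot v := by
  simp [wtot]

@[simp] lemma wfac_nil : wfac ([] : List (ℕ × X)) = 1 := rfl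
@[simp] lemma wfac_cons (q : ℕ × X) (t : List (ℕ × X)) :
    wfac (q :: t) = q.1.factorial * wfac t := rfl
lemma wfac_append (u v : List (ℕ × X)) : wfac (u ++ v) = wfac u * wfac v := by
  simp [wfac]

lemma Wd_length (B : List (ℕ × X)) : (S.Wd B).length = wtot B := by
  induction B with
  | nil => rfl
  | cons q t ih => simp [ih, wtot]

@[simp] lemma twistD_nil (v : X) : S.twistD [] v = [] := rfl
@[simp] lemma twistD_cons (q : ℕ × X) (t : List (ℕ × X)) (v : X) :
    S.twistD (q :: t) v = (q.1, S.τ (S.sigmaWord (S.Wd t) v) q.2) :: S.twistD t v := rfl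

@[simp] lemma twistD_length (B : List (ℕ × X)) (v : X) :
    (S.twistD B v).length = B.length := by
  induction B with
  | nil => simp
  | cons q t ih => simp [ih]

lemma twistD_fst (B : List (ℕ × X)) (v : X) :
    (S.twistD B v).map Prod.fst = B.map Prod.fst := by
  induction B with
  | nil => simp
  | cons q t ih => simp [ih]

lemma wtot_twistD (B : List (ℕ × X)) (v : X) : wtot (S.twistD B v) = wtot B := by
  unfold wtot; rw [twistD_fst]

lemma wfac_twistD (B : List (ℕ × X)) (v : X) : wfac (S.twistD B v) = wfac B := by
  unfold wfac
  rw [show (fun q : ℕ × X => q.1.factorial) = Nat.factorial ∘ Prod.fst from rfl,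
    ← List.map_map, ← List.map_map, twistD_fst]

lemma Wd_twistD (B : List (ℕ × X)) (v : X) :
    S.Wd (S.twistD B v) = S.twistWord (S.Wd B) v := by
  induction B with
  | nil => simp
  | cons q t ih =>
    rw [twistD_cons, Wd_cons, Wd_cons, twistWord_append, ih, twist_psi]

lemma twistD_append (u w : List (ℕ × X)) (z : X) :
    S.twistD (u ++ w) z = S.twistD u (S.sigmaWord (S.Wd w) z) ++ S.twistD w z := by
  induction u with
  | nil => simp
  | cons q t ih =>
    simp only [List.cons_append, twistD_cons, ih, Wd_append, sigmaWord_append]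

/-- data-level M3. -/
lemma twistD_M3 (y z : X) (u : List (ℕ × X)) :
    S.twistD (S.twistD u (S.σ y z)) (S.τ z y) = S.twistD (S.twistD u y) z := by
  induction u with
  | nil => simp
  | cons q t ih =>
    simp only [twistD_cons, ih, Wd_twistD]
    congr 1
    rw [← S.M2, S.M1]
    exact congrArg (fun w => (q.1, w)) (S.braid3 q.2 (S.sigmaWord (S.Wd t) y)
      (S.sigmaWord (S.twistWord (S.Wd t) y) z)).symm

variable [Nonempty X]

/-- The `i`-th block (with junk default). -/
noncomputable def blk (B : List (ℕ × X)) (i : ℕ) : ℕ × X :=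
  B.getD i (0, Classical.arbitrary X)

@[simp] lemma blk_cons_zero (q : ℕ × X) (t : List (ℕ × X)) : blk (q :: t) 0 = q := rfl
@[simp] lemma blk_cons_succ (q : ℕ × X) (t : List (ℕ × X)) (i : ℕ) :
    blk (q :: t) (i + 1) = blk t i := rfl

lemma blk_append_add (p r : List (ℕ × X)) (n : ℕ) :
    blk (p ++ r) (p.length + n) = blk r n := by
  induction p with
  | nil => simp [blk]
  | cons q t ih =>
    simpa [Nat.succ_add] using ih

lemma blk_append_lt (p r : List (ℕ × X)) (j : ℕ) (h : j < p.length) :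
    blk (p ++ r) j = blk p j := by
  induction p generalizing j with
  | nil => simp at h
  | cons q t ih =>
    cases j with
    | zero => rfl
    | succ j => simpa using ih j (by simpa using h)

lemma blk_drop (B : List (ℕ × X)) (n k : ℕ) : blk (B.drop n) k = blk B (n + k) := by
  induction B generalizing n with
  | nil => simp [blk]
  | cons q t ih =>
    cases n with
    | zero => simp
    | succ n => simpa [Nat.succ_add] using ih n

lemma blk_eq_getElem (B : List (ℕ × X)) (i : ℕ) (h : i < B.length) :
    blk B i = B[i] := List.getD_eq_getElem B _ h

lemma blk_twistD_fst (B : List (ℕ × X)) (v : X) (j : ℕ) :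
    (blk (S.twistD B v) j).1 = (blk B j).1 := by
  induction B generalizing j with
  | nil => simp
  | cons q t ih =>
    cases j with
    | zero => rfl
    | succ j => simpa using ih j

/-- Basic split of a list at an index. -/
lemma split_at (B : List (ℕ × X)) (i : ℕ) (h : i < B.length) :
    B = B.take i ++ blk B i :: B.drop (i + 1) := by
  rw [blk_eq_getElem B i h]
  conv_lhs => rw [← List.take_append_drop i B]
  rw [List.drop_eq_getElem_cons h]

lemma take_len_append (p r : List (ℕ × X)) : (p ++ r).take p.length = p :=
  List.take_left

lemma take_len_add (p r : List (ℕ × X)) (n : ℕ) :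
    (p ++ r).take (p.length + n) = p ++ r.take n := List.take_length_add_append n

lemma drop_len_add (p r : List (ℕ × X)) (n : ℕ) :
    (p ++ r).drop (p.length + n) = r.drop n := List.drop_length_add_append n

lemma blk_append_len (p r : List (ℕ × X)) : blk (p ++ r) p.length = blk r 0 := by
  simpa using blk_append_add p r 0

lemma drop_append_len1 (p s : List (ℕ × X)) (q : ℕ × X) :
    (p ++ q :: s).drop (p.length + 1) = s := by
  simpa using drop_len_add p (q :: s) 1

/-! ### Extraction -/

/-- The letter extracted from block `i`. -/
noncomputable def exL (B : List (ℕ × X)) (i : ℕ) : X :=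
  S.D^[(blk B i).1 - 1] (blk B i).2

/-- The front letter obtained by pulling the top of block `i` to the front. -/
noncomputable def cF (B : List (ℕ × X)) (i : ℕ) : X :=
  S.sigmaWord (S.Wd (B.take i)) (S.exL B i)

/-- The data remaining after extracting the top of block `i` to the front. -/
noncomputable def extD (B : List (ℕ × X)) (i : ℕ) : List (ℕ × X) :=
  S.twistD (B.take i) (S.exL B i) ++ ((blk B i).1 - 1, (blk B i).2) :: B.drop (i + 1)

lemma exL_concat (P s : List (ℕ × X)) (l : ℕ) (a : X) :
    S.exL (P ++ (l + 1, a) :: s) P.length = S.D^[l] a := by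
  unfold exL
  rw [blk_append_len]
  simp

lemma cF_concat (P s : List (ℕ × X)) (l : ℕ) (a : X) :
    S.cF (P ++ (l + 1, a) :: s) P.length = S.sigmaWord (S.Wd P) (S.D^[l] a) := by
  unfold cF
  rw [S.exL_concat, take_len_append]

lemma extD_concat (P s : List (ℕ × X)) (l : ℕ) (a : X) :
    S.extD (P ++ (l + 1, a) :: s) P.length = S.twistD P (S.D^[l] a) ++ (l, a) :: s := by
  unfold extD
  rw [S.exL_concat, take_len_append, blk_append_len, drop_append_len1]
  simp

lemma length_extD (B : List (ℕ × X)) (i : ℕ) (h : i < B.length) :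
    (S.extD B i).length = B.length := by
  unfold extD
  simp only [List.length_append, twistD_length, List.length_cons, List.length_take,
    List.length_drop]
  omega

lemma wtot_extD (B : List (ℕ × X)) (i : ℕ) (h : i < B.length) (ha : 0 < (blk B i).1) :
    wtot (S.extD B i) + 1 = wtot B := by
  conv_rhs => rw [split_at B i h]
  unfold extD
  rw [wtot_append, wtot_append, wtot_cons, wtot_cons, S.wtot_twistD]
  omega

lemma wfac_extD (B : List (ℕ × X)) (i : ℕ) (h : i < B.length) (ha : 0 < (blk B i).1) :
    (blk B i).1 * wfac (S.extD B i) = wfac B := by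
  conv_rhs => rw [split_at B i h]
  unfold extD
  rw [wfac_append, wfac_append, wfac_cons, wfac_cons, S.wfac_twistD]
  obtain ⟨l, hl⟩ : ∃ l, (blk B i).1 = l + 1 := ⟨(blk B i).1 - 1, by omega⟩
  rw [hl]
  simp only [Nat.add_sub_cancel, Nat.factorial_succ]
  ring

end NDIS

namespace NDIS

set_option linter.unusedSectionVars false

variable (S : NDIS X) [Nonempty X]

lemma sigma_psi_mid (l g : ℕ) (a b : X) (m : List (ℕ × X)) :
    S.sigmaWord (S.Wd ((l + 1, a) :: m)) (S.D^[g] b)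
      = S.σ (S.D^[l] a)
          (S.sigmaWord (S.Psi l a) (S.sigmaWord (S.Wd m) (S.D^[g] b))) := by
  rw [Wd_cons, Psi_succ, List.cons_append, sigmaWord_cons, sigmaWord_append]

/-- Exchange lemma, extracted block before the other block. -/
lemma pair_lt (p m s : List (ℕ × X)) (l g : ℕ) (a b : X) :
    S.σ (S.cF (p ++ ((l+1, a) :: (m ++ ((g+1, b) :: s)))) p.length)
        (S.cF (S.extD (p ++ ((l+1, a) :: (m ++ ((g+1, b) :: s)))) p.length)
          (p.length + 1 + m.length))
      = S.cF (p ++ ((l+1, a) :: (m ++ ((g+1, b) :: s)))) (p.length + 1 + m.length) ∧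
    S.τ (S.cF (S.extD (p ++ ((l+1, a) :: (m ++ ((g+1, b) :: s)))) p.length)
          (p.length + 1 + m.length))
        (S.cF (p ++ ((l+1, a) :: (m ++ ((g+1, b) :: s)))) p.length)
      = S.cF (S.extD (p ++ ((l+1, a) :: (m ++ ((g+1, b) :: s)))) (p.length + 1 + m.length))
          p.length ∧
    S.extD (S.extD (p ++ ((l+1, a) :: (m ++ ((g+1, b) :: s)))) p.length) (p.length + 1 + m.length)
      = S.extD (S.extD (p ++ ((l+1, a) :: (m ++ ((g+1, b) :: s)))) (p.length + 1 + m.length))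
          p.length := by
  have hassoc : p ++ ((l+1,a) :: (m ++ ((g+1,b) :: s)))
      = (p ++ ((l+1,a) :: m)) ++ ((g+1,b) :: s) := by simp
  have hlen2 : p.length + 1 + m.length = (p ++ ((l+1,a) :: m)).length := by
    simp only [List.length_append, List.length_cons]; omega
  -- c_i
  have hci : S.cF (p ++ ((l+1, a) :: (m ++ ((g+1, b) :: s)))) p.length
      = S.sigmaWord (S.Wd p) (S.D^[l] a) := S.cF_concat p _ l a
  -- c_j
  have hcj : S.cF (p ++ ((l+1, a) :: (m ++ ((g+1, b) :: s)))) (p.length + 1 + m.length)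
      = S.sigmaWord (S.Wd p)
          (S.σ (S.D^[l] a)
            (S.sigmaWord (S.Psi l a) (S.sigmaWord (S.Wd m) (S.D^[g] b)))) := by
    rw [hassoc, hlen2, S.cF_concat, Wd_append, sigmaWord_append, sigma_psi_mid]
  -- extD at i
  have hei : S.extD (p ++ ((l+1, a) :: (m ++ ((g+1, b) :: s)))) p.length
      = S.twistD p (S.D^[l] a) ++ ((l, a) :: (m ++ ((g+1, b) :: s))) := S.extD_concat p _ l a
  have hei2 : S.extD (p ++ ((l+1, a) :: (m ++ ((g+1, b) :: s)))) p.length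
      = (S.twistD p (S.D^[l] a) ++ ((l, a) :: m)) ++ ((g+1, b) :: s) := by
    rw [hei]; simp
  have hlen3 : p.length + 1 + m.length = (S.twistD p (S.D^[l] a) ++ ((l, a) :: m)).length := by
    simp only [List.length_append, List.length_cons, twistD_length]; omega
  -- c'_j
  have hcj' : S.cF (S.extD (p ++ ((l+1, a) :: (m ++ ((g+1, b) :: s)))) p.length)
        (p.length + 1 + m.length)
      = S.sigmaWord (S.twistWord (S.Wd p) (S.D^[l] a))
          (S.sigmaWord (S.Psi l a) (S.sigmaWord (S.Wd m) (S.D^[g] b))) := by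
    rw [hei2, hlen3, S.cF_concat, Wd_append, Wd_cons, sigmaWord_append, sigmaWord_append,
      Wd_twistD]
  -- extD at j
  have hej : S.extD (p ++ ((l+1, a) :: (m ++ ((g+1, b) :: s)))) (p.length + 1 + m.length)
      = S.twistD p (S.σ (S.D^[l] a)
            (S.sigmaWord (S.Psi l a) (S.sigmaWord (S.Wd m) (S.D^[g] b))))
        ++ ((l+1, S.τ (S.sigmaWord (S.Wd m) (S.D^[g] b)) a)
            :: (S.twistD m (S.D^[g] b) ++ ((g, b) :: s))) := by
    rw [hassoc, hlen2, S.extD_concat, twistD_append, twistD_cons, sigma_psi_mid]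
    simp
  -- c'_i
  have hci' : S.cF (S.extD (p ++ ((l+1, a) :: (m ++ ((g+1, b) :: s))))
        (p.length + 1 + m.length)) p.length
      = S.sigmaWord
          (S.twistWord (S.Wd p)
            (S.σ (S.D^[l] a) (S.sigmaWord (S.Psi l a) (S.sigmaWord (S.Wd m) (S.D^[g] b)))))
          (S.τ (S.sigmaWord (S.Psi l a) (S.sigmaWord (S.Wd m) (S.D^[g] b))) (S.D^[l] a)) := by
    have hplen : p.length = (S.twistD p (S.σ (S.D^[l] a)
        (S.sigmaWord (S.Psi l a) (S.sigmaWord (S.Wd m) (S.D^[g] b))))).length := by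
      simp
    rw [hej, hplen, S.cF_concat, Wd_twistD, S.tau_psi]
  refine ⟨?_, ?_, ?_⟩
  · rw [hci, hcj, hcj']
    exact (S.M1 (S.D^[l] a) (S.sigmaWord (S.Psi l a) (S.sigmaWord (S.Wd m) (S.D^[g] b)))
      (S.Wd p)).symm
  · rw [hci, hcj', hci']
    exact S.M2 (S.D^[l] a) (S.sigmaWord (S.Psi l a) (S.sigmaWord (S.Wd m) (S.D^[g] b))) (S.Wd p)
  · -- diamond
    have hLHS : S.extD (S.extD (p ++ ((l+1, a) :: (m ++ ((g+1, b) :: s)))) p.length)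
          (p.length + 1 + m.length)
        = S.twistD (S.twistD p (S.D^[l] a))
              (S.sigmaWord (S.Psi l a) (S.sigmaWord (S.Wd m) (S.D^[g] b)))
          ++ ((l, S.τ (S.sigmaWord (S.Wd m) (S.D^[g] b)) a)
              :: (S.twistD m (S.D^[g] b) ++ ((g, b) :: s))) := by
      rw [hei2, hlen3, S.extD_concat, twistD_append, twistD_cons]
      simp [sigmaWord_append]
    have hRHS : S.extD (S.extD (p ++ ((l+1, a) :: (m ++ ((g+1, b) :: s))))
          (p.length + 1 + m.length)) p.length
        = S.twistD (S.twistD p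
              (S.σ (S.D^[l] a) (S.sigmaWord (S.Psi l a) (S.sigmaWord (S.Wd m) (S.D^[g] b)))))
              (S.τ (S.sigmaWord (S.Psi l a) (S.sigmaWord (S.Wd m) (S.D^[g] b))) (S.D^[l] a))
          ++ ((l, S.τ (S.sigmaWord (S.Wd m) (S.D^[g] b)) a)
              :: (S.twistD m (S.D^[g] b) ++ ((g, b) :: s))) := by
      have hplen : p.length = (S.twistD p (S.σ (S.D^[l] a)
          (S.sigmaWord (S.Psi l a) (S.sigmaWord (S.Wd m) (S.D^[g] b))))).length := by
        simp
      rw [hej, hplen, S.extD_concat, S.tau_psi]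
    rw [hLHS, hRHS, S.twistD_M3]

end NDIS

namespace NDIS

variable (S : NDIS X) [Nonempty X]

/-- Exchange lemma, extracted block after the other block. -/
lemma pair_gt (p m s : List (ℕ × X)) (l g : ℕ) (a b : X) :
    S.σ (S.cF (p ++ ((g+1, b) :: (m ++ ((l+1, a) :: s)))) (p.length + 1 + m.length))
        (S.cF (S.extD (p ++ ((g+1, b) :: (m ++ ((l+1, a) :: s)))) (p.length + 1 + m.length))
          p.length)
      = S.cF (p ++ ((g+1, b) :: (m ++ ((l+1, a) :: s)))) p.length ∧
    S.τ (S.cF (S.extD (p ++ ((g+1, b) :: (m ++ ((l+1, a) :: s)))) (p.length + 1 + m.length))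
          p.length)
        (S.cF (p ++ ((g+1, b) :: (m ++ ((l+1, a) :: s)))) (p.length + 1 + m.length))
      = S.cF (S.extD (p ++ ((g+1, b) :: (m ++ ((l+1, a) :: s)))) p.length)
          (p.length + 1 + m.length) ∧
    S.extD (S.extD (p ++ ((g+1, b) :: (m ++ ((l+1, a) :: s)))) (p.length + 1 + m.length))
        p.length
      = S.extD (S.extD (p ++ ((g+1, b) :: (m ++ ((l+1, a) :: s)))) p.length)
          (p.length + 1 + m.length) := by
  have hassoc : p ++ ((g+1,b) :: (m ++ ((l+1,a) :: s)))
      = (p ++ ((g+1,b) :: m)) ++ ((l+1,a) :: s) := by simp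
  have hlen2 : p.length + 1 + m.length = (p ++ ((g+1,b) :: m)).length := by
    simp only [List.length_append, List.length_cons]; omega
  -- c_i  (extracted block, the later one)
  have hci : S.cF (p ++ ((g+1, b) :: (m ++ ((l+1, a) :: s)))) (p.length + 1 + m.length)
      = S.sigmaWord (S.Wd p)
          (S.σ (S.D^[g] b) (S.sigmaWord (S.Psi g b) (S.sigmaWord (S.Wd m) (S.D^[l] a)))) := by
    rw [hassoc, hlen2, S.cF_concat, Wd_append, sigmaWord_append, sigma_psi_mid]
  -- c_j
  have hcj : S.cF (p ++ ((g+1, b) :: (m ++ ((l+1, a) :: s)))) p.length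
      = S.sigmaWord (S.Wd p) (S.D^[g] b) := S.cF_concat p _ g b
  -- extD at i
  have hei : S.extD (p ++ ((g+1, b) :: (m ++ ((l+1, a) :: s)))) (p.length + 1 + m.length)
      = S.twistD p (S.σ (S.D^[g] b) (S.sigmaWord (S.Psi g b) (S.sigmaWord (S.Wd m) (S.D^[l] a))))
        ++ ((g+1, S.τ (S.sigmaWord (S.Wd m) (S.D^[l] a)) b)
            :: (S.twistD m (S.D^[l] a) ++ ((l, a) :: s))) := by
    rw [hassoc, hlen2, S.extD_concat, twistD_append, twistD_cons, sigma_psi_mid]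
    simp
  -- c'_j
  have hcj' : S.cF (S.extD (p ++ ((g+1, b) :: (m ++ ((l+1, a) :: s)))) (p.length + 1 + m.length))
        p.length
      = S.τ (S.sigmaWord (S.twistWord (S.Wd p) (S.D^[g] b))
              (S.sigmaWord (S.Psi g b) (S.sigmaWord (S.Wd m) (S.D^[l] a))))
            (S.sigmaWord (S.Wd p) (S.D^[g] b)) := by
    have hplen : p.length = (S.twistD p (S.σ (S.D^[g] b)
        (S.sigmaWord (S.Psi g b) (S.sigmaWord (S.Wd m) (S.D^[l] a))))).length := by simp
    rw [hei, hplen, S.cF_concat, Wd_twistD, ← S.tau_psi,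
      ← S.M2 (S.D^[g] b) (S.sigmaWord (S.Psi g b) (S.sigmaWord (S.Wd m) (S.D^[l] a))) (S.Wd p)]
  -- extD at j
  have hej : S.extD (p ++ ((g+1, b) :: (m ++ ((l+1, a) :: s)))) p.length
      = S.twistD p (S.D^[g] b) ++ ((g, b) :: (m ++ ((l+1, a) :: s))) := S.extD_concat p _ g b
  -- c'_i
  have hci' : S.cF (S.extD (p ++ ((g+1, b) :: (m ++ ((l+1, a) :: s)))) p.length)
        (p.length + 1 + m.length)
      = S.sigmaWord (S.twistWord (S.Wd p) (S.D^[g] b))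
          (S.sigmaWord (S.Psi g b) (S.sigmaWord (S.Wd m) (S.D^[l] a))) := by
    have hass2 : S.twistD p (S.D^[g] b) ++ ((g, b) :: (m ++ ((l+1, a) :: s)))
        = (S.twistD p (S.D^[g] b) ++ ((g, b) :: m)) ++ ((l+1, a) :: s) := by simp
    have hlen3 : p.length + 1 + m.length
        = (S.twistD p (S.D^[g] b) ++ ((g, b) :: m)).length := by
      simp only [List.length_append, List.length_cons, twistD_length]; omega
    rw [hej, hass2, hlen3, S.cF_concat, Wd_append, Wd_cons, Wd_twistD, sigmaWord_append,
      sigmaWord_append]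
  refine ⟨?_, ?_, ?_⟩
  · rw [hci, hcj, hcj',
      S.M1 (S.D^[g] b) (S.sigmaWord (S.Psi g b) (S.sigmaWord (S.Wd m) (S.D^[l] a))) (S.Wd p)]
    exact S.inv1 _ _
  · rw [hci, hcj', hci',
      S.M1 (S.D^[g] b) (S.sigmaWord (S.Psi g b) (S.sigmaWord (S.Wd m) (S.D^[l] a))) (S.Wd p)]
    exact S.inv2 _ _
  · -- diamond
    have hLHS : S.extD (S.extD (p ++ ((g+1, b) :: (m ++ ((l+1, a) :: s))))
          (p.length + 1 + m.length)) p.length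
        = S.twistD (S.twistD p (S.σ (S.D^[g] b)
              (S.sigmaWord (S.Psi g b) (S.sigmaWord (S.Wd m) (S.D^[l] a)))))
            (S.τ (S.sigmaWord (S.Psi g b) (S.sigmaWord (S.Wd m) (S.D^[l] a))) (S.D^[g] b))
          ++ ((g, S.τ (S.sigmaWord (S.Wd m) (S.D^[l] a)) b)
              :: (S.twistD m (S.D^[l] a) ++ ((l, a) :: s))) := by
      have hplen : p.length = (S.twistD p (S.σ (S.D^[g] b)
          (S.sigmaWord (S.Psi g b) (S.sigmaWord (S.Wd m) (S.D^[l] a))))).length := by simp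
      rw [hei, hplen, S.extD_concat, S.tau_psi]
    have hRHS : S.extD (S.extD (p ++ ((g+1, b) :: (m ++ ((l+1, a) :: s)))) p.length)
          (p.length + 1 + m.length)
        = S.twistD (S.twistD p (S.D^[g] b))
            (S.sigmaWord (S.Psi g b) (S.sigmaWord (S.Wd m) (S.D^[l] a)))
          ++ ((g, S.τ (S.sigmaWord (S.Wd m) (S.D^[l] a)) b)
              :: (S.twistD m (S.D^[l] a) ++ ((l, a) :: s))) := by
      have hass2 : S.twistD p (S.D^[g] b) ++ ((g, b) :: (m ++ ((l+1, a) :: s)))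
          = (S.twistD p (S.D^[g] b) ++ ((g, b) :: m)) ++ ((l+1, a) :: s) := by simp
      have hlen3 : p.length + 1 + m.length
          = (S.twistD p (S.D^[g] b) ++ ((g, b) :: m)).length := by
        simp only [List.length_append, List.length_cons, twistD_length]; omega
      rw [hej, hass2, hlen3, S.extD_concat, twistD_append, twistD_cons]
      simp [sigmaWord_append]
    rw [hLHS, hRHS, S.twistD_M3]

/-- Extracting twice from the same block. -/
lemma pair_eq (p s : List (ℕ × X)) (l : ℕ) (a : X) :
    S.cF (p ++ ((l + 2, a) :: s)) p.length
      = S.D (S.cF (S.extD (p ++ ((l + 2, a) :: s)) p.length) p.length) := by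
  have h1 : S.cF (p ++ ((l + 2, a) :: s)) p.length
      = S.sigmaWord (S.Wd p) (S.D^[l+1] a) := S.cF_concat p s (l+1) a
  have h2 : S.extD (p ++ ((l + 2, a) :: s)) p.length
      = S.twistD p (S.D^[l+1] a) ++ ((l + 1, a) :: s) := S.extD_concat p s (l+1) a
  have h3 : S.cF (S.extD (p ++ ((l + 2, a) :: s)) p.length) p.length
      = S.sigmaWord (S.Wd (S.twistD p (S.D^[l+1] a))) (S.D^[l] a) := by
    have hplen : p.length = (S.twistD p (S.D^[l+1] a)).length := by simp
    rw [h2, hplen, S.cF_concat]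
  rw [h1, h3, Wd_twistD, Function.iterate_succ_apply' S.D l a]
  exact S.lemCw (S.D^[l] a) (S.Wd p)

end NDIS

namespace NDIS

variable (S : NDIS X) [Nonempty X]

lemma blk_take (B : List (ℕ × X)) (i j : ℕ) (hj : j < i) :
    blk (B.take i) j = blk B j := by
  induction B generalizing i j with
  | nil => simp
  | cons q t ih =>
    cases i with
    | zero => omega
    | succ i =>
      cases j with
      | zero => rfl
      | succ j => simpa using ih i j (by omega)

lemma length_take_eq (B : List (ℕ × X)) (i : ℕ) (hi : i ≤ B.length) :
    (B.take i).length = i := by simp; omega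

lemma blk_extD_self (B : List (ℕ × X)) (i : ℕ) (hi : i < B.length) :
    blk (S.extD B i) i = ((blk B i).1 - 1, (blk B i).2) := by
  have h1 : (S.twistD (B.take i) (S.exL B i)).length = i := by
    rw [twistD_length]; exact length_take_eq B i (le_of_lt hi)
  have h2 := blk_append_len (S.twistD (B.take i) (S.exL B i))
    ((((blk B i).1 - 1, (blk B i).2)) :: B.drop (i + 1))
  rw [h1] at h2
  unfold extD
  rw [h2, blk_cons_zero]

lemma blk_extD_ne (B : List (ℕ × X)) (i j : ℕ) (hij : j ≠ i) (hi : i < B.length) :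
    (blk (S.extD B i) j).1 = (blk B j).1 := by
  rcases Nat.lt_or_ge j i with h | h
  · unfold extD
    have h1 : (S.twistD (B.take i) (S.exL B i)).length = i := by
      rw [twistD_length]; exact length_take_eq B i (le_of_lt hi)
    rw [blk_append_lt _ _ j (by omega), S.blk_twistD_fst, blk_take B i j h]
    
  · have h2 : i < j := by omega
    have hE : S.extD B i
        = (S.twistD (B.take i) (S.exL B i) ++ [((blk B i).1 - 1, (blk B i).2)])
          ++ B.drop (i + 1) := by
      unfold extD; simp
    have hlen : (S.twistD (B.take i) (S.exL B i)
        ++ [((blk B i).1 - 1, (blk B i).2)]).length = i + 1 := by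
      simp only [List.length_append, twistD_length, List.length_singleton]
      rw [length_take_eq B i (le_of_lt hi)]
    have hj2 : j = (S.twistD (B.take i) (S.exL B i)
        ++ [((blk B i).1 - 1, (blk B i).2)]).length + (j - i - 1) := by omega
    rw [hE, hj2, blk_append_add, blk_drop]
    congr 2
    omega

lemma blk_pos_split (B : List (ℕ × X)) (i : ℕ) (ha : 0 < (blk B i).1) :
    blk B i = ((blk B i).1 - 1 + 1, (blk B i).2) :=
  Prod.ext_iff.mpr ⟨by omega, rfl⟩

/-- Two-index split of a block list. -/
lemma split_at2 (B : List (ℕ × X)) (i j : ℕ) (hij : i < j) (hj : j < B.length) :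
    B = B.take i ++ (blk B i :: (((B.drop (i + 1)).take (j - i - 1))
        ++ (blk B j :: B.drop (j + 1)))) := by
  have h1 := split_at B i (by omega)
  have hlen : j - i - 1 < (B.drop (i + 1)).length := by
    rw [List.length_drop]; omega
  have h2 := split_at (B.drop (i + 1)) (j - i - 1) hlen
  have h3 : blk (B.drop (i + 1)) (j - i - 1) = blk B j := by
    rw [blk_drop]; congr 1; omega
  have h4 : (B.drop (i + 1)).drop (j - i - 1 + 1) = B.drop (j + 1) := by
    rw [List.drop_drop]; congr 1; omega
  rw [h3, h4] at h2
  conv_lhs => rw [h1, h2]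

/-- Index form of the exchange lemmas. -/
lemma exch (B : List (ℕ × X)) (i j : ℕ) (hij : i ≠ j) (hi : i < B.length)
    (hj : j < B.length) (ai : 0 < (blk B i).1) (aj : 0 < (blk B j).1) :
    S.σ (S.cF B i) (S.cF (S.extD B i) j) = S.cF B j ∧
    S.τ (S.cF (S.extD B i) j) (S.cF B i) = S.cF (S.extD B j) i ∧
    S.extD (S.extD B i) j = S.extD (S.extD B j) i := by
  rcases Nat.lt_or_ge i j with h | h
  · have hB := split_at2 B i j h hj
    set p := B.take i with hp
    set m := (B.drop (i + 1)).take (j - i - 1) with hm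
    set s := B.drop (j + 1) with hs
    have hpl : p.length = i := length_take_eq B i (by omega)
    have hml : m.length = j - i - 1 := by
      rw [hm]; apply length_take_eq; rw [List.length_drop]; omega
    have hbi := blk_pos_split B i ai
    have hbj := blk_pos_split B j aj
    have hB2 : B = p ++ (((blk B i).1 - 1 + 1, (blk B i).2)
        :: (m ++ (((blk B j).1 - 1 + 1, (blk B j).2) :: s))) := by
      rw [← hbi, ← hbj]; exact hB
    have hj2 : j = p.length + 1 + m.length := by omega
    have := S.pair_lt p m s ((blk B i).1 - 1) ((blk B j).1 - 1) (blk B i).2 (blk B j).2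
    rw [← hB2, hpl] at this
    rw [show i + 1 + m.length = j from by omega] at this
    exact this
  · have h' : j < i := by omega
    have hB := split_at2 B j i h' hi
    set p := B.take j with hp
    set m := (B.drop (j + 1)).take (i - j - 1) with hm
    set s := B.drop (i + 1) with hs
    have hpl : p.length = j := length_take_eq B j (by omega)
    have hml : m.length = i - j - 1 := by
      rw [hm]; apply length_take_eq; rw [List.length_drop]; omega
    have hbi := blk_pos_split B i ai
    have hbj := blk_pos_split B j aj
    have hB2 : B = p ++ (((blk B j).1 - 1 + 1, (blk B j).2)
        :: (m ++ (((blk B i).1 - 1 + 1, (blk B i).2) :: s))) := by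
      rw [← hbi, ← hbj]; exact hB
    have hi2 : i = p.length + 1 + m.length := by omega
    have := S.pair_gt p m s ((blk B i).1 - 1) ((blk B j).1 - 1) (blk B i).2 (blk B j).2
    rw [← hB2, hpl] at this
    rw [show j + 1 + m.length = i from by omega] at this
    exact this

/-- Same-block double extraction. -/
lemma cF_extD_self (B : List (ℕ × X)) (i : ℕ) (hi : i < B.length)
    (h2 : 2 ≤ (blk B i).1) :
    S.cF B i = S.D (S.cF (S.extD B i) i) := by
  have hB := split_at B i hi
  set p := B.take i with hp
  set s := B.drop (i + 1) with hs
  have hpl : p.length = i := length_take_eq B i (by omega)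
  have hbi : blk B i = ((blk B i).1 - 2 + 2, (blk B i).2) := Prod.ext_iff.mpr ⟨by omega, rfl⟩
  have hB2 : B = p ++ (((blk B i).1 - 2 + 2, (blk B i).2) :: s) := by
    rw [← hbi]; exact hB
  have := S.pair_eq p s ((blk B i).1 - 2) (blk B i).2
  rw [← hB2, hpl] at this
  exact this

/-- The family condition: distinct front letters for all pairs of nonempty blocks. -/
def FamC (S : NDIS X) [Nonempty X] (B : List (ℕ × X)) : Prop :=
  ∀ i j, i < j → j < B.length → 0 < (blk B i).1 → 0 < (blk B j).1 → S.cF B i ≠ S.cF B j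

lemma FamC.ne {S : NDIS X} {B : List (ℕ × X)} (h : S.FamC B) {i j : ℕ} (hij : i ≠ j)
    (hi : i < B.length) (hj : j < B.length) (ai : 0 < (blk B i).1) (aj : 0 < (blk B j).1) :
    S.cF B i ≠ S.cF B j := by
  rcases Nat.lt_or_ge i j with h' | h'
  · exact h i j h' hj ai aj
  · exact (h j i (by omega) hi aj ai).symm

/-- The family condition is preserved by extraction. -/
lemma famC_extD (B : List (ℕ × X)) (i : ℕ) (hF : S.FamC B) (hi : i < B.length)
    (ai : 0 < (blk B i).1) : S.FamC (S.extD B i) := by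
  have key : ∀ t, t < B.length → 0 < (blk (S.extD B i) t).1 →
      S.σ (S.cF B i) (S.cF (S.extD B i) t) = S.cF B t ∧ 0 < (blk B t).1 := by
    intro t ht hat
    by_cases hti : t = i
    · subst hti
      have h2 : 2 ≤ (blk B t).1 := by
        have := S.blk_extD_self B t ht
        rw [this] at hat; simp at hat; omega
      refine ⟨?_, by omega⟩
      rw [S.cF_extD_self B t ht h2]
      exact S.sigma_D _
    · have hbt : 0 < (blk B t).1 := by
        rw [← S.blk_extD_ne B i t hti hi]; exact hat
      exact ⟨(S.exch B i t (fun hh => hti hh.symm) hi ht ai hbt).1, hbt⟩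
  intro p q hpq hq ap aq
  have hq' : q < B.length := by
    rw [← S.length_extD B i hi]; exact hq
  have hp' : p < B.length := by omega
  obtain ⟨kp, bp⟩ := key p hp' ap
  obtain ⟨kq, bq⟩ := key q hq' aq
  intro hEq
  have : S.cF B p = S.cF B q := by rw [← kp, ← kq, hEq]
  exact hF.ne (by omega) hp' hq' bp bq this

end NDIS

namespace NDIS

variable (S : NDIS X)

/-! ### Orbit machinery -/

lemma step_symm {x y : List X} (h : S.Step x y) : S.Step y x := by
  obtain ⟨u, v, i, j, rfl, rfl⟩ := h
  exact ⟨u, v, S.σ i j, S.τ j i, rfl, by rw [S.inv1, S.inv2]⟩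

lemma step_length {x y : List X} (h : S.Step x y) : x.length = y.length := by
  obtain ⟨u, v, i, j, rfl, rfl⟩ := h
  simp

lemma eqv_length {x y : List X} (h : Relation.EqvGen S.Step x y) : x.length = y.length := by
  induction h with
  | rel _ _ h => exact S.step_length h
  | refl => rfl
  | symm _ _ _ ih => exact ih.symm
  | trans _ _ _ _ _ ih1 ih2 => exact ih1.trans ih2

lemma mem_orb_self (x : List X) : x ∈ S.Orb x := Relation.EqvGen.refl x

lemma orb_closed_subset {x : List X} {C : Set (List X)} (hx : x ∈ C)
    (hC : ∀ y ∈ C, ∀ z, S.Step y z → z ∈ C) : S.Orb x ⊆ C := by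
  have key : ∀ a b, Relation.EqvGen S.Step a b → (a ∈ C ↔ b ∈ C) := by
    intro a b h
    induction h with
    | rel a b h => exact ⟨fun ha => hC a ha b h, fun hb => hC b hb a (S.step_symm h)⟩
    | refl => exact Iff.rfl
    | symm _ _ _ ih => exact ih.symm
    | trans _ _ _ _ _ ih1 ih2 => exact ih1.trans ih2
  exact fun y hy => (key x y hy).1 hx

lemma step_cons {u v : List X} (c : X) (h : S.Step u v) : S.Step (c :: u) (c :: v) := by
  obtain ⟨p, q, i, j, rfl, rfl⟩ := h
  exact ⟨c :: p, q, i, j, rfl, rfl⟩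

lemma cons_eqv (c : X) {u v : List X} (h : Relation.EqvGen S.Step u v) :
    Relation.EqvGen S.Step (c :: u) (c :: v) := by
  induction h with
  | rel a b h => exact Relation.EqvGen.rel _ _ (S.step_cons c h)
  | refl => exact Relation.EqvGen.refl _
  | symm a b _ ih => exact Relation.EqvGen.symm _ _ ih
  | trans a b cc _ _ ih1 ih2 => exact Relation.EqvGen.trans _ _ _ ih1 ih2

/-- Moving a letter to the front of a word. -/
lemma move_front (z : X) (w : List X) : ∀ u : List X,
    Relation.EqvGen S.Step (u ++ z :: w) (S.sigmaWord u z :: (S.twistWord u z ++ w)) := by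
  intro u
  induction u with
  | nil => exact Relation.EqvGen.refl _
  | cons p u' ih =>
    have h1 : Relation.EqvGen S.Step ((p :: u') ++ z :: w)
        (p :: (S.sigmaWord u' z :: (S.twistWord u' z ++ w))) := S.cons_eqv p ih
    refine Relation.EqvGen.trans _ _ _ h1 (Relation.EqvGen.rel _ _ ?_)
    exact ⟨[], S.twistWord u' z ++ w, p, S.sigmaWord u' z, rfl, rfl⟩

lemma orb_nil : S.Orb ([] : List X) = {[]} := by
  ext y
  constructor
  · intro hy
    have := S.eqv_length hy
    simp only [List.length_nil] at this
    exact Set.mem_singleton_iff.mpr (List.length_eq_zero_iff.mp this.symm)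
  · rintro rfl
    exact S.mem_orb_self _

lemma orb_finite [Fintype X] (x : List X) : (S.Orb x).Finite := by
  apply Set.Finite.subset (List.finite_length_eq (α := X) (n := x.length))
  intro y hy
  exact (S.eqv_length hy).symm

variable [Nonempty X]

/-- Extraction moves the top of a nonempty block to the front, up to orbit equivalence. -/
lemma extract_eqv_concat (p s : List (ℕ × X)) (l : ℕ) (a : X) :
    Relation.EqvGen S.Step (S.Wd (p ++ ((l+1, a) :: s)))
      (S.cF (p ++ ((l+1, a) :: s)) p.length
        :: S.Wd (S.extD (p ++ ((l+1, a) :: s)) p.length)) := by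
  rw [S.cF_concat, S.extD_concat, Wd_append, Wd_cons, Wd_append, Wd_cons, Wd_twistD, Psi_succ]
  have := S.move_front (S.D^[l] a) (S.Psi l a ++ S.Wd s) (S.Wd p)
  simpa using this

lemma extract_eqv (B : List (ℕ × X)) (i : ℕ) (hi : i < B.length) (ai : 0 < (blk B i).1) :
    Relation.EqvGen S.Step (S.Wd B) (S.cF B i :: S.Wd (S.extD B i)) := by
  have hB := split_at B i hi
  have hpl : (B.take i).length = i := length_take_eq B i (by omega)
  have hbi := blk_pos_split B i ai
  have hB2 : B = B.take i ++ (((blk B i).1 - 1 + 1, (blk B i).2) :: B.drop (i + 1)) := by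
    rw [← hbi]; exact hB
  have := S.extract_eqv_concat (B.take i) (B.drop (i + 1)) ((blk B i).1 - 1) (blk B i).2
  rw [← hB2, hpl] at this
  exact this

/-- A nonempty word has the form given by its first nonempty block. -/
lemma head_extract (B : List (ℕ × X)) (h : 0 < wtot B) :
    ∃ i, i < B.length ∧ 0 < (blk B i).1 ∧ S.Wd B = S.cF B i :: S.Wd (S.extD B i) := by
  induction B with
  | nil => simp [wtot] at h
  | cons q t ih =>
    rcases Nat.eq_zero_or_pos q.1 with hq | hq
    · have ht : 0 < wtot t := by
        rw [wtot_cons, hq] at h; simpa using h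
      obtain ⟨i, hi, hbi, hw⟩ := ih ht
      refine ⟨i + 1, by simpa using Nat.succ_lt_succ hi, by simpa using hbi, ?_⟩
      have e0 : S.Wd (q :: t) = S.Wd t := by
        rw [Wd_cons, hq, Psi_zero, List.nil_append]
      have e1 : S.cF (q :: t) (i + 1) = S.cF t i := by
        unfold cF exL
        rw [blk_cons_succ, List.take_succ_cons, Wd_cons, hq, Psi_zero, List.nil_append]
      have e2 : S.Wd (S.extD (q :: t) (i + 1)) = S.Wd (S.extD t i) := by
        unfold extD exL
        rw [blk_cons_succ, List.take_succ_cons, twistD_cons, List.drop_succ_cons,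
          Wd_append, Wd_append, Wd_cons, hq, Psi_zero, List.nil_append]
      rw [e0, e1, e2, hw]
    · obtain ⟨l, hl⟩ : ∃ l, q.1 = l + 1 := ⟨q.1 - 1, by omega⟩
      have hq' : q = (l + 1, q.2) := Prod.ext_iff.mpr ⟨hl, rfl⟩
      refine ⟨0, by simp, by simpa using hq, ?_⟩
      have h1 := S.cF_concat ([] : List (ℕ × X)) t l q.2
      have h2 := S.extD_concat ([] : List (ℕ × X)) t l q.2
      simp only [List.nil_append, List.length_nil] at h1 h2
      rw [hq', h1, h2]
      simp [Psi_succ]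

lemma Wd_eq_nil (B : List (ℕ × X)) (h : wtot B = 0) : S.Wd B = [] := by
  have := S.Wd_length B
  rw [h] at this
  exact List.length_eq_zero_iff.mp this

lemma wfac_of_wtot_zero (B : List (ℕ × X)) (h : wtot B = 0) : wfac B = 1 := by
  induction B with
  | nil => rfl
  | cons q t ih =>
    rw [wtot_cons] at h
    rw [wfac_cons, ih (by omega), show q.1 = 0 by omega]
    rfl

lemma sum_blk (B : List (ℕ × X)) :
    ∑ i ∈ Finset.range B.length, (blk B i).1 = wtot B := by
  induction B with
  | nil => simp
  | cons q t ih =>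
    rw [List.length_cons, Finset.sum_range_succ', wtot_cons]
    simp only [blk_cons_succ, blk_cons_zero]
    rw [ih]
    ring

end NDIS

lemma ncard_biUnion_of_disjoint {α : Type*} {ι : Type*} [DecidableEq ι] (I : Finset ι)
    (f : ι → Set α) (hfin : ∀ i ∈ I, (f i).Finite)
    (hdisj : ∀ i ∈ I, ∀ j ∈ I, i ≠ j → Disjoint (f i) (f j)) :
    (⋃ i ∈ I, f i).ncard = ∑ i ∈ I, (f i).ncard := by
  induction I using Finset.induction_on with
  | empty => simp
  | @insert a I' ha ih =>
    rw [Finset.sum_insert ha, Finset.set_biUnion_insert]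
    have hfI : (⋃ i ∈ I', f i).Finite :=
      Set.Finite.biUnion I'.finite_toSet (fun i hi => hfin i (Finset.mem_insert_of_mem hi))
    have hd : Disjoint (f a) (⋃ i ∈ I', f i) := by
      rw [Set.disjoint_iUnion₂_right]
      intro i hi
      exact hdisj a (Finset.mem_insert_self a I') i (Finset.mem_insert_of_mem hi)
        (fun h => ha (h ▸ hi))
    rw [Set.ncard_union_eq hd (hfin a (Finset.mem_insert_self a I')) hfI,
      ih (fun i hi => hfin i (Finset.mem_insert_of_mem hi))
        (fun i hi j hj hij => hdisj i (Finset.mem_insert_of_mem hi) j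
          (Finset.mem_insert_of_mem hj) hij)]

namespace NDIS

variable (S : NDIS X) [Nonempty X]

/-- The first-letter decomposition of an orbit. -/
def DecompSet (S : NDIS X) [Nonempty X] (B : List (ℕ × X)) : Set (List X) :=
  {y | ∃ i, i < B.length ∧ 0 < (blk B i).1 ∧
    ∃ z ∈ S.Orb (S.Wd (S.extD B i)), y = S.cF B i :: z}

theorem main_induction [Fintype X] : ∀ n : ℕ, ∀ B : List (ℕ × X), wtot B = n → S.FamC B →
    (0 < n → S.Orb (S.Wd B) = S.DecompSet B) ∧
    (S.Orb (S.Wd B)).ncard * wfac B = n.factorial := by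
  intro n
  induction n using Nat.strong_induction_on with
  | _ n IH =>
  intro B hB hF
  rcases Nat.eq_zero_or_pos n with hn | hn
  · subst hn
    refine ⟨fun c => absurd c (by omega), ?_⟩
    rw [S.Wd_eq_nil B hB, S.orb_nil, Set.ncard_singleton, wfac_of_wtot_zero B hB]
    rfl
  · have hstruct : S.Orb (S.Wd B) = S.DecompSet B := by
      apply Set.Subset.antisymm
      · apply S.orb_closed_subset
        · obtain ⟨i, hi, hbi, hw⟩ := S.head_extract B (hB ▸ hn)
          exact ⟨i, hi, hbi, S.Wd (S.extD B i), S.mem_orb_self _, hw⟩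
        · rintro y ⟨i, hi, hbi, z, hz, rfl⟩ y' hstep
          obtain ⟨u, v, c, d, hyu, hy'⟩ := hstep
          cases u with
          | cons w u' =>
            simp only [List.cons_append] at hyu
            injection hyu with h1 h2
            refine ⟨i, hi, hbi, u' ++ S.σ c d :: S.τ d c :: v, ?_, by rw [hy', ← h1]; rfl⟩
            exact Relation.EqvGen.trans _ _ _ hz
              (Relation.EqvGen.rel _ _ ⟨u', v, c, d, h2, rfl⟩)
          | nil =>
            simp only [List.nil_append] at hyu
            injection hyu with h1 h2
            have hwt : wtot (S.extD B i) + 1 = n := by rw [S.wtot_extD B i hi hbi, hB]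
            have hlenz : z.length = wtot (S.extD B i) := by
              rw [← S.Wd_length]
              exact (S.eqv_length hz).symm
            have hm : 0 < wtot (S.extD B i) := by
              rw [← hlenz, h2]; simp
            have hFe := S.famC_extD B i hF hi hbi
            have hIH := (IH (wtot (S.extD B i)) (by omega) (S.extD B i) rfl hFe).1 hm
            have hzmem : z ∈ S.DecompSet (S.extD B i) := by rw [← hIH]; exact hz
            obtain ⟨j, hj, hbj, w, hw, hzw⟩ := hzmem
            rw [h2] at hzw
            injection hzw with hd1 hd2
            by_cases hji : j = i
            · subst hji
              have h2b : 2 ≤ (blk B j).1 := by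
                have := S.blk_extD_self B j hi
                rw [this] at hbj
                simp only at hbj
                omega
              have hfix := S.cF_extD_self B j hi h2b
              refine ⟨j, hi, hbi, z, hz, ?_⟩
              rw [hy', List.nil_append, h2, ← h1, hfix, ← hd1, S.sigma_D, S.tau_D]
            · have hj' : j < B.length := by rw [← S.length_extD B i hi]; exact hj
              have hbj' : 0 < (blk B j).1 := by
                rw [← S.blk_extD_ne B i j hji hi]; exact hbj
              obtain ⟨e1, e2, e3⟩ := S.exch B i j (fun hh => hji hh.symm) hi hj' hbi hbj'
              refine ⟨j, hj', hbj', S.cF (S.extD B j) i :: w, ?_, ?_⟩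
              · have hiE : i < (S.extD B j).length := by
                  rw [S.length_extD B j hj']; exact hi
                have hbiE : 0 < (blk (S.extD B j) i).1 := by
                  rw [S.blk_extD_ne B j i (fun hh => hji hh.symm) hj']; exact hbi
                have hext := S.extract_eqv (S.extD B j) i hiE hbiE
                have hw' : w ∈ S.Orb (S.Wd (S.extD (S.extD B j) i)) := by
                  rw [← e3]; exact hw
                exact Relation.EqvGen.trans _ _ _ hext (S.cons_eqv _ hw')
              · rw [hy', List.nil_append, ← h1, hd1, hd2, e1, e2]
      · rintro y ⟨i, hi, hbi, z, hz, rfl⟩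
        exact Relation.EqvGen.trans _ _ _ (S.extract_eqv B i hi hbi) (S.cons_eqv _ hz)
    refine ⟨fun _ => hstruct, ?_⟩
    classical
    set act := (Finset.range B.length).filter (fun i => 0 < (blk B i).1) with hact
    have hact_sub : ∀ i ∈ act, i < B.length ∧ 0 < (blk B i).1 := fun i hi => by
      rw [hact, Finset.mem_filter, Finset.mem_range] at hi; exact hi
    have hdec : S.DecompSet B
        = ⋃ i ∈ act, (fun z => S.cF B i :: z) '' S.Orb (S.Wd (S.extD B i)) := by
      ext y
      simp only [DecompSet, Set.mem_setOf_eq, Set.mem_iUnion, Set.mem_image, hact,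
        Finset.mem_filter, Finset.mem_range, exists_prop]
      constructor
      · rintro ⟨i, hi, hbi, z, hz, rfl⟩; exact ⟨i, ⟨hi, hbi⟩, z, hz, rfl⟩
      · rintro ⟨i, ⟨hi, hbi⟩, z, hz, rfl⟩; exact ⟨i, hi, hbi, z, hz, rfl⟩
    have hfin : ∀ i ∈ act, ((fun z => S.cF B i :: z) '' S.Orb (S.Wd (S.extD B i))).Finite :=
      fun i _ => (S.orb_finite _).image _
    have hdisj : ∀ i ∈ act, ∀ j ∈ act, i ≠ j →
        Disjoint ((fun z => S.cF B i :: z) '' S.Orb (S.Wd (S.extD B i)))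
          ((fun z => S.cF B j :: z) '' S.Orb (S.Wd (S.extD B j))) := by
      intro i hi j hj hij
      rw [Set.disjoint_left]
      rintro y ⟨z1, _, rfl⟩ ⟨z2, _, hEq⟩
      injection hEq with hh _
      exact hF.ne hij (hact_sub i hi).1 (hact_sub j hj).1 (hact_sub i hi).2
        (hact_sub j hj).2 hh.symm
    have hterm : ∀ i ∈ act,
        ((fun z => S.cF B i :: z) '' S.Orb (S.Wd (S.extD B i))).ncard * wfac B
          = (blk B i).1 * (n - 1).factorial := by
      intro i hi
      obtain ⟨hiB, hbi⟩ := hact_sub i hi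
      have himg : ((fun z => S.cF B i :: z) '' S.Orb (S.Wd (S.extD B i))).ncard
          = (S.Orb (S.Wd (S.extD B i))).ncard :=
        Set.ncard_image_of_injective _ (fun a b hab => by injection hab)
      have hwt : wtot (S.extD B i) = n - 1 := by
        have := S.wtot_extD B i hiB hbi; omega
      have hIHc := (IH (n - 1) (by omega) (S.extD B i) hwt
        (S.famC_extD B i hF hiB hbi)).2
      rw [himg, ← S.wfac_extD B i hiB hbi, ← Nat.mul_assoc,
        Nat.mul_comm (S.Orb (S.Wd (S.extD B i))).ncard (blk B i).1, Nat.mul_assoc, hIHc]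
    rw [hstruct, hdec, ncard_biUnion_of_disjoint act _ hfin hdisj, Finset.sum_mul,
      Finset.sum_congr rfl hterm, ← Finset.sum_mul]
    have hsum_act : ∑ i ∈ act, (blk B i).1 = n := by
      rw [hact, Finset.sum_filter_of_ne, sum_blk, hB]
      intro x _ hne
      exact Nat.pos_of_ne_zero hne
    rw [hsum_act]
    exact Nat.mul_factorial_pred (Nat.pos_iff_ne_zero.mp hn)

end NDIS

namespace NDIS

variable (S : NDIS X) [Nonempty X]

/-- The front letters of two blocks agree iff the λ-condition fails for the pair. -/
lemma cF_eq_iff (p m s : List (ℕ × X)) (l g : ℕ) (a b : X) :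
    S.cF (p ++ ((l+1, a) :: (m ++ ((g+1, b) :: s)))) p.length
      = S.cF (p ++ ((l+1, a) :: (m ++ ((g+1, b) :: s)))) (p.length + 1 + m.length)
    ↔ b = S.Dinv^[g+1] (S.tauWord (S.Wd m) a) := by
  have hassoc : p ++ ((l+1,a) :: (m ++ ((g+1,b) :: s)))
      = (p ++ ((l+1,a) :: m)) ++ ((g+1,b) :: s) := by simp
  have hlen2 : p.length + 1 + m.length = (p ++ ((l+1,a) :: m)).length := by
    simp only [List.length_append, List.length_cons]; omega
  have hci : S.cF (p ++ ((l+1, a) :: (m ++ ((g+1, b) :: s)))) p.length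
      = S.sigmaWord (S.Wd p) (S.D^[l] a) := S.cF_concat p _ l a
  have hcj : S.cF (p ++ ((l+1, a) :: (m ++ ((g+1, b) :: s)))) (p.length + 1 + m.length)
      = S.sigmaWord (S.Wd p)
          (S.sigmaWord (S.Psi (l+1) a) (S.sigmaWord (S.Wd m) (S.D^[g] b))) := by
    rw [hassoc, hlen2, S.cF_concat, Wd_append, Wd_cons, sigmaWord_append, sigmaWord_append]
  rw [hci, hcj, Function.Injective.eq_iff (S.sigmaWord_injective (S.Wd p)),
    ← S.sigma_psi_Dinv a l,
    Function.Injective.eq_iff (S.sigmaWord_injective (S.Psi (l+1) a))]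
  constructor
  · intro h
    have h1 : a = S.D (S.sigmaWord (S.Wd m) (S.D^[g] b)) := by
      rw [← h, S.D_Dinv]
    have h2 : S.tauWord (S.Wd m) a = S.D^[g+1] b := by
      rw [h1, S.tauWord_D_sigmaWord]
      exact (Function.iterate_succ_apply' S.D g b).symm
    exact (S.eq_Dinv_iter_iff (g+1) b _).mpr h2.symm
  · intro h
    have h2 : S.D^[g+1] b = S.tauWord (S.Wd m) a := (S.eq_Dinv_iter_iff _ _ _).mp h
    have h3 : S.tauWord (S.Wd m) (S.D (S.sigmaWord (S.Wd m) (S.D^[g] b))) = S.D^[g+1] b := by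
      rw [S.tauWord_D_sigmaWord]
      exact (Function.iterate_succ_apply' S.D g b).symm
    have h4 := S.tauWord_injective (S.Wd m) (h3.trans h2)
    rw [← h4, S.Dinv_D]

end NDIS

theorem card_orbit_of_lambda_element' {X : Type*} [Fintype X] [Nonempty X]
    (S : NDIS X)
    {n k : ℕ} (L : Fin k → ℕ) (hpos : ∀ t, 0 < L t)
    (hsum : ∑ t, L t = n)
    (x : List X) (hx : S.IsLambdaWord L x) :
    (S.Orb x).ncard = Nat.factorial n / ∏ t, Nat.factorial (L t) := by
  obtain ⟨a, rfl, hfam⟩ := hx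
  classical
  set B : List (ℕ × X) := List.ofFn (fun t => (L t, a t)) with hBdef
  have hmap : (List.ofFn fun t => S.Psi (L t) (a t))
      = B.map (fun q => S.Psi q.1 q.2) := by
    rw [hBdef, List.map_ofFn]
    rfl
  have hWd : S.Wd B = S.word L a := by
    unfold NDIS.Wd NDIS.word
    rw [hmap]
  have hlenB : B.length = k := by simp [hBdef]
  have hblk : ∀ t (ht : t < k), NDIS.blk B t = (L ⟨t, ht⟩, a ⟨t, ht⟩) := by
    intro t ht
    rw [NDIS.blk_eq_getElem B t (by omega)]
    simp [hBdef]
  have hwtot : NDIS.wtot B = n := by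
    unfold NDIS.wtot
    rw [hBdef, List.map_ofFn]
    rw [show (Prod.fst ∘ fun t => (L t, a t)) = L from rfl, List.sum_ofFn, hsum]
  have hwfac : NDIS.wfac B = ∏ t, Nat.factorial (L t) := by
    unfold NDIS.wfac
    rw [hBdef, List.map_ofFn]
    rw [show ((fun q : ℕ × X => q.1.factorial) ∘ fun t => (L t, a t))
      = fun t => (L t).factorial from rfl, List.prod_ofFn]
  have hFam : S.FamC B := by
    intro i j hij hj hbi hbj
    have hjk : j < k := hlenB ▸ hj
    have hik : i < k := by omega
    have hB2' := NDIS.split_at2 B i j hij hj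
    set p := B.take i with hp
    set m := (B.drop (i + 1)).take (j - i - 1) with hm
    set s := B.drop (j + 1) with hs
    have hpl : p.length = i := NDIS.length_take_eq B i (by omega)
    have hml : m.length = j - i - 1 := by
      rw [hm]; apply NDIS.length_take_eq; rw [List.length_drop]; omega
    have hbi' := NDIS.blk_pos_split B i hbi
    have hbj' := NDIS.blk_pos_split B j hbj
    have hB2 : B = p ++ (((NDIS.blk B i).1 - 1 + 1, (NDIS.blk B i).2)
        :: (m ++ (((NDIS.blk B j).1 - 1 + 1, (NDIS.blk B j).2) :: s))) := by
      rw [← hbi', ← hbj']; exact hB2'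
    have hiff := S.cF_eq_iff p m s ((NDIS.blk B i).1 - 1) ((NDIS.blk B j).1 - 1)
      (NDIS.blk B i).2 (NDIS.blk B j).2
    rw [← hB2, hpl] at hiff
    rw [show i + 1 + m.length = j from by omega] at hiff
    intro hEq
    have hcond := hiff.mp hEq
    have hmid : S.midword L a ⟨i, hik⟩ ⟨j, hjk⟩ = S.Wd m := by
      unfold NDIS.midword NDIS.Wd
      rw [hmap, hm]
      congr 1
      simp only [Fin.val_mk]
      rw [List.map_take, List.map_drop]
    have hbiq := hblk i hik
    have hbjq := hblk j hjk
    apply hfam ⟨i, hik⟩ ⟨j, hjk⟩ (by exact hij)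
    rw [hmid]
    rw [hbiq, hbjq] at hcond
    simp only at hcond
    rw [show L ⟨j, hjk⟩ - 1 + 1 = L ⟨j, hjk⟩ from by have := hpos ⟨j, hjk⟩; omega] at hcond
    exact hcond
  have hmain := (S.main_induction n B hwtot hFam).2
  rw [← hWd]
  have hposf : 0 < ∏ t, Nat.factorial (L t) :=
    Finset.prod_pos (fun t _ => Nat.factorial_pos _)
  rw [← hwfac] at hposf ⊢
  exact (Nat.div_eq_of_eq_mul_left hposf hmain.symm).symm


end


/-- The offset `λ_1 + ⋯ + λ_i` of the `i`-th block (0-based). -/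
def blockOffset {k : ℕ} (L : Fin k → ℕ) (i : Fin k) : ℕ :=
  ∑ t ∈ Finset.univ.filter (fun t => t < i), L t

/-- A `(λ_1, …, λ_k)`-shuffle: a permutation strictly increasing on each consecutive block. -/
def IsShuffle {k n : ℕ} (L : Fin k → ℕ) (θ : Equiv.Perm (Fin n)) : Prop :=
  ∀ (i : Fin k) (p q : Fin n), blockOffset L i ≤ (p : ℕ) → p < q →
    (q : ℕ) < blockOffset L i + L i → θ p < θ q

/-- Let `(X, r)` be a non-degenerate involutive solution with `|X| = m ≥ 2`,
`λ ∈ P(n, m)` with positive parts `L = (λ_1 ≥ ⋯ ≥ λ_k > 0)`, and `x ∈ X^n` a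
`λ`-element. Then `|O(x)| = n!/(λ_1! λ_2! ⋯ λ_k!)`. -/
theorem card_orbit_of_lambda_element {X : Type*} [Fintype X] [Nonempty X]
    (S : NDIS X) (hm : 2 ≤ Fintype.card X)
    {n k : ℕ} (L : Fin k → ℕ) (hpos : ∀ t, 0 < L t) (hmono : Antitone L)
    (hsum : ∑ t, L t = n) (hk : k ≤ Fintype.card X)
    (x : List X) (hx : S.IsLambdaWord L x) :
    (S.Orb x).ncard = Nat.factorial n / ∏ t, Nat.factorial (L t) :=
  card_orbit_of_lambda_element' S L hpos hsum x hx
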